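/- Let (ℓ₁, ℓ₂, ℓ₃, ℓ₄) be a maximal quadruple of Lagrangians in (ℝ^{2n}, ω), i.e. every cyclically oriented subtriple is maximal. Then the symmetric bilinear form q_{ℓ₄,ℓ₃} − q_{ℓ₁,ℓ₂} is positive definite. In particular the quadric hypersurfaces {q_{ℓ₄,ℓ₃} = 0} and {q_{ℓ₁,ℓ₂} = 0} in P(ℝ^{2n}) are disjoint. -/

import Mathlib

open Matrix
open scoped Classical

/-- `ℝ^{2n}` split as `x`-coordinates and `y`-coordinates of a symplectic basis. -/
abbrev SympV (n : ℕ) := (Fin n → ℝ) × (Fin n → ℝ)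

/-- The standard symplectic form `ω = Σ xᵢ* ∧ yᵢ*`. -/
noncomputable def omg {n : ℕ} (v w : SympV n) : ℝ := v.1 ⬝ᵥ w.2 - w.1 ⬝ᵥ v.2

/-- A Lagrangian subspace: `n`-dimensional and isotropic for `ω`. -/
def IsLagrangian {n : ℕ} (ℓ : Submodule ℝ (SympV n)) : Prop :=
  Module.finrank ℝ ℓ = n ∧ ∀ v ∈ ℓ, ∀ w ∈ ℓ, omg v w = 0

/-- The quadratic form `q_{ℓ,ℓ'}(v) = ω(π(v), π'(v))` associated to a pair of
complementary subspaces (`π, π'` the projections of the splitting `ℓ ⊕ ℓ'`);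
junk value `0` if the subspaces are not complementary. -/
noncomputable def qPair {n : ℕ} (ℓ ℓ' : Submodule ℝ (SympV n)) (v : SympV n) : ℝ :=
  if h : IsCompl ℓ ℓ' then
    omg (ℓ.linearProjOfIsCompl ℓ' h v : SympV n)
      (v - (ℓ.linearProjOfIsCompl ℓ' h v : SympV n))
  else 0

/-- A maximal triple of Lagrangians: pairwise transverse and `q_{a,c}` positive
definite on `b` (the characterization of Maslov index `n`). -/
def IsMaximalTriple {n : ℕ} (a b c : Submodule ℝ (SympV n)) : Prop :=
  IsCompl a b ∧ IsCompl b c ∧ IsCompl a c ∧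
    ∀ v ∈ b, v ≠ 0 → 0 < qPair a c v

/-! ### Auxiliary lemmas -/

lemma omg_self {n : ℕ} (v : SympV n) : omg v v = 0 := by simp [omg]

/-- Evaluate `qPair` on an explicit decomposition. -/
lemma qPair_eq {n : ℕ} {a b : Submodule ℝ (SympV n)} (h : IsCompl a b)
    {p q : SympV n} (hp : p ∈ a) (hq : q ∈ b) :
    qPair a b (p + q) = omg p q := by
  rw [qPair, dif_pos h]
  have h1 : a.linearProjOfIsCompl b h (p + q) = ⟨p, hp⟩ := by
    erw [map_add, Submodule.linearProjOfIsCompl_apply_right' h hq, add_zero]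
    exact Submodule.linearProjOfIsCompl_apply_left h ⟨p, hp⟩
  rw [h1]
  simp

lemma qPair_zero {n : ℕ} (a b : Submodule ℝ (SympV n)) : qPair a b 0 = 0 := by
  rw [qPair]
  split
  · simp [omg]
  · rfl

/-- Decomposition along complementary subspaces. -/
lemma exists_decomp {n : ℕ} {a b : Submodule ℝ (SympV n)} (h : IsCompl a b) (v : SympV n) :
    ∃ p ∈ a, ∃ q ∈ b, v = p + q := by
  have hv : v ∈ a ⊔ b := by rw [h.sup_eq_top]; trivial
  obtain ⟨p, hp, q, hq, h'⟩ := Submodule.mem_sup.mp hv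
  exact ⟨p, hp, q, hq, h'.symm⟩

/-- Cyclic step for maximal triples: if `q_{a,c}` is positive definite on `b`
then `q_{b,a}` is positive definite on `c`. -/
lemma cyclic_pos {n : ℕ} {a b c : Submodule ℝ (SympV n)}
    (hab : IsCompl a b) (hac : IsCompl a c)
    (hpos : ∀ v ∈ b, v ≠ 0 → 0 < qPair a c v) :
    ∀ w ∈ c, w ≠ 0 → 0 < qPair b a w := by
  intro w hw hw0
  obtain ⟨p, hp, q, hq, hpq⟩ := exists_decomp hab.symm w
  have hba : qPair b a w = omg p q := by rw [hpq]; exact qPair_eq hab.symm hp hq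
  have hp0 : p ≠ 0 := by
    intro h0
    apply hw0
    have hwa : w ∈ a := by rw [hpq, h0, zero_add]; exact hq
    exact (Submodule.disjoint_def.mp hac.disjoint) w hwa hw
  have hdec : p = (-q) + w := by rw [hpq]; abel
  have hq2 : qPair a c p = omg (-q) w := by
    rw [hdec]; exact qPair_eq hac (a.neg_mem hq) hw
  have hval : omg (-q) w = omg p q := by
    rw [hpq]
    simp only [omg, Prod.fst_add, Prod.snd_add, Prod.fst_neg, Prod.snd_neg,
      dotProduct_add, add_dotProduct, neg_dotProduct, dotProduct_neg]
    ring
  have := hpos p hp hp0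
  rw [hq2, hval] at this
  rw [hba]; exact this

/-- For a maximal quadruple of Lagrangians `(ℓ₁, ℓ₂, ℓ₃, ℓ₄)` (every
cyclically oriented subtriple maximal), the form `q_{ℓ₄,ℓ₃} − q_{ℓ₁,ℓ₂}` is
positive definite; in particular the quadric hypersurfaces `{q_{ℓ₄,ℓ₃} = 0}` and
`{q_{ℓ₁,ℓ₂} = 0}` in `P(ℝ^{2n})` are disjoint. -/
theorem maximal_quadruple_qPair_sub_posDef (n : ℕ)
    (ℓ₁ ℓ₂ ℓ₃ ℓ₄ : Submodule ℝ (SympV n))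
    (hL₁ : IsLagrangian ℓ₁) (hL₂ : IsLagrangian ℓ₂)
    (hL₃ : IsLagrangian ℓ₃) (hL₄ : IsLagrangian ℓ₄)
    (h123 : IsMaximalTriple ℓ₁ ℓ₂ ℓ₃) (h234 : IsMaximalTriple ℓ₂ ℓ₃ ℓ₄)
    (h341 : IsMaximalTriple ℓ₃ ℓ₄ ℓ₁) (h412 : IsMaximalTriple ℓ₄ ℓ₁ ℓ₂) :
    (∀ v : SympV n, v ≠ 0 → 0 < qPair ℓ₄ ℓ₃ v - qPair ℓ₁ ℓ₂ v) ∧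
      ∀ v : SympV n, v ≠ 0 → ¬(qPair ℓ₄ ℓ₃ v = 0 ∧ qPair ℓ₁ ℓ₂ v = 0) := by
  have hc12 : IsCompl ℓ₁ ℓ₂ := h123.1
  have hc23 : IsCompl ℓ₂ ℓ₃ := h123.2.1
  have hc13 : IsCompl ℓ₁ ℓ₃ := h123.2.2.1
  have hc34 : IsCompl ℓ₃ ℓ₄ := h341.1
  have hc41 : IsCompl ℓ₄ ℓ₁ := h341.2.1
  have hc43 : IsCompl ℓ₄ ℓ₃ := hc34.symm
  have hc14 : IsCompl ℓ₁ ℓ₄ := hc41.symm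
  have hc32 : IsCompl ℓ₃ ℓ₂ := hc23.symm
  -- q_{ℓ₁,ℓ₄} is positive definite on ℓ₃ (double cyclic rotation of h341)
  have pos1 : ∀ w ∈ ℓ₃, w ≠ 0 → 0 < qPair ℓ₁ ℓ₄ w := by
    have step1 : ∀ w ∈ ℓ₁, w ≠ 0 → 0 < qPair ℓ₄ ℓ₃ w :=
      cyclic_pos h341.1 h341.2.2.1 h341.2.2.2
    exact cyclic_pos hc41 hc43 step1
  -- q_{ℓ₃,ℓ₂} is positive definite on ℓ₁ (double cyclic rotation of h123)
  have pos2 : ∀ w ∈ ℓ₁, w ≠ 0 → 0 < qPair ℓ₃ ℓ₂ w := by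
    have step1 : ∀ w ∈ ℓ₃, w ≠ 0 → 0 < qPair ℓ₂ ℓ₁ w :=
      cyclic_pos hc12 hc13 h123.2.2.2
    exact cyclic_pos hc23 hc12.symm step1
  have main : ∀ v : SympV n, v ≠ 0 → 0 < qPair ℓ₄ ℓ₃ v - qPair ℓ₁ ℓ₂ v := by
    intro v hv
    obtain ⟨a, ha, b, hb, hvab⟩ := exists_decomp hc12 v
    obtain ⟨a', ha', r, hr, hvar⟩ := exists_decomp hc13 v
    obtain ⟨d, hd, c, hc, hvdc⟩ := exists_decomp hc43 v
    have q12 : qPair ℓ₁ ℓ₂ v = omg a b := by rw [hvab]; exact qPair_eq hc12 ha hb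
    have q13 : qPair ℓ₁ ℓ₃ v = omg a' r := by rw [hvar]; exact qPair_eq hc13 ha' hr
    have q43 : qPair ℓ₄ ℓ₃ v = omg d c := by rw [hvdc]; exact qPair_eq hc43 hd hc
    -- the two correction vectors
    set s₁ : SympV n := r - c with hs₁def
    set s₂ : SympV n := a' - a with hs₂def
    have hs₁mem : s₁ ∈ ℓ₃ := Submodule.sub_mem _ hr hc
    have hs₂mem : s₂ ∈ ℓ₁ := Submodule.sub_mem _ ha' ha
    have heq1 : a' + r = d + c := hvar.symm.trans hvdc
    have heq2 : a + b = a' + r := hvab.symm.trans hvar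
    have hd_eq : d = a' + r - c := eq_sub_of_add_eq heq1.symm
    have hb_eq : b = a' + r - a := eq_sub_of_add_eq (by rw [add_comm]; exact heq2)
    have hs₁dec : s₁ = (-a') + d := by rw [hs₁def, hd_eq]; abel
    have hs₂dec : s₂ = (-r) + b := by rw [hs₂def, hb_eq]; abel
    have qs₁ : qPair ℓ₁ ℓ₄ s₁ = omg (-a') d := by
      rw [hs₁dec]; exact qPair_eq hc14 (ℓ₁.neg_mem ha') hd
    have qs₂ : qPair ℓ₃ ℓ₂ s₂ = omg (-r) b := by
      rw [hs₂dec]; exact qPair_eq hc32 (ℓ₃.neg_mem hr) hb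
    -- key identities
    have hrc : omg r c = 0 := hL₃.2 r hr c hc
    have haa' : omg a a' = 0 := hL₁.2 a ha a' ha'
    have hrc' : r.1 ⬝ᵥ c.2 - c.1 ⬝ᵥ r.2 = 0 := hrc
    have haa'' : a.1 ⬝ᵥ a'.2 - a'.1 ⬝ᵥ a.2 = 0 := haa'
    have key1 : omg (-a') d = omg d c - omg a' r := by
      rw [hd_eq]
      simp only [omg, Prod.fst_add, Prod.snd_add, Prod.fst_sub, Prod.snd_sub,
        Prod.fst_neg, Prod.snd_neg, dotProduct_add, add_dotProduct,
        dotProduct_sub, sub_dotProduct, neg_dotProduct, dotProduct_neg]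
      linear_combination -hrc'
    have key2 : omg (-r) b = omg a' r - omg a b := by
      rw [hb_eq]
      simp only [omg, Prod.fst_add, Prod.snd_add, Prod.fst_sub, Prod.snd_sub,
        Prod.fst_neg, Prod.snd_neg, dotProduct_add, add_dotProduct,
        dotProduct_sub, sub_dotProduct, neg_dotProduct, dotProduct_neg]
      linear_combination haa''
    have hsum : qPair ℓ₄ ℓ₃ v - qPair ℓ₁ ℓ₂ v = qPair ℓ₁ ℓ₄ s₁ + qPair ℓ₃ ℓ₂ s₂ := by
      rw [q12, q43, qs₁, qs₂, key1, key2]; ring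
    -- not both corrections vanish
    have hnotboth : ¬(s₁ = 0 ∧ s₂ = 0) := by
      rintro ⟨h1, h2⟩
      apply hv
      have hbr : b = r := by
        have h' : (-r) + b = 0 := by rw [← hs₂dec, h2]
        have : b = r := by
          have := h'
          rw [neg_add_eq_zero] at this
          exact this.symm
        exact this
      have hb0 : b = 0 := by
        have hbmem3 : b ∈ ℓ₃ := hbr ▸ hr
        exact (Submodule.disjoint_def.mp hc23.disjoint) b hb hbmem3
      have hr0 : r = 0 := by rw [← hbr]; exact hb0
      have hda : d = a' := by
        have h' : (-a') + d = 0 := by rw [← hs₁dec, h1]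
        rw [neg_add_eq_zero] at h'
        exact h'.symm
      have hd0 : d = 0 := by
        have hdmem1 : d ∈ ℓ₁ := hda ▸ ha'
        exact (Submodule.disjoint_def.mp hc41.disjoint) d hd hdmem1
      have hc0 : c = 0 := by
        have : r - c = 0 := h1
        have : c = r := by
          have := sub_eq_zero.mp this
          exact this.symm
        rw [this, hr0]
      rw [hvdc, hd0, hc0, add_zero]
    -- nonnegativity of each summand
    have nn1 : 0 ≤ qPair ℓ₁ ℓ₄ s₁ := by
      by_cases h1 : s₁ = 0
      · rw [h1, qPair_zero]
      · exact le_of_lt (pos1 s₁ hs₁mem h1)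
    have nn2 : 0 ≤ qPair ℓ₃ ℓ₂ s₂ := by
      by_cases h2 : s₂ = 0
      · rw [h2, qPair_zero]
      · exact le_of_lt (pos2 s₂ hs₂mem h2)
    rw [hsum]
    by_cases h2 : s₂ = 0
    · have h1 : s₁ ≠ 0 := fun h1 => hnotboth ⟨h1, h2⟩
      have := pos1 s₁ hs₁mem h1
      linarith
    · have := pos2 s₂ hs₂mem h2
      linarith
  refine ⟨main, fun v hv h0 => ?_⟩
  have := main v hv
  rw [h0.1, h0.2] at this
  linarith
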